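/- Let P = 𝔽_2^n (the n-dimensional affine space over the field with two elements, n ≥ 2) and let k = 2m be even with 2 < k < 2^n. Let B be the family of all k-element subsets of P whose elements sum to zero. Then D = (P, B) is a 3-(2^n, k, r₃) design: there is a constant r₃ such that every three pairwise distinct vectors of 𝔽_2^n are contained in exactly r₃ members of B. -/

import Mathlib

open Finset

private lemma zmod2_add_self : ∀ a : ZMod 2, a + a = 0 := by decide

private lemma pi_add_self {n : ℕ} (a : Fin n → ZMod 2) : a + a = 0 := by
  funext i; exact zmod2_add_self (a i)

private lemma li_pair {n : ℕ} {u v : Fin n → ZMod 2} (hu : u ≠ 0) (hv : v ≠ 0)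
    (huv : u ≠ v) : LinearIndependent (ZMod 2) ![u, v] := by
  rw [linearIndependent_fin2]
  refine ⟨by simpa using hv, fun a => ?_⟩
  fin_cases a
  · simpa using fun h => hu (h.symm.trans (zero_smul (ZMod 2) v))
  · simpa using fun h => huv (h.symm.trans (one_smul (ZMod 2) v))

/-- existence of a linear equivalence mapping one independent pair to another -/
private lemma exists_equiv_pair {n : ℕ} {u v u' v' : Fin n → ZMod 2}
    (huv : u ≠ v) (huv' : u' ≠ v')
    (h : LinearIndependent (ZMod 2) ![u, v]) (h' : LinearIndependent (ZMod 2) ![u', v']) :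
    ∃ e : (Fin n → ZMod 2) ≃ₗ[ZMod 2] (Fin n → ZMod 2), e u = u' ∧ e v = v' := by
  have hs : LinearIndepOn (ZMod 2) id (Set.range ![u, v]) :=
    h.linearIndepOn_id
  have hs' : LinearIndepOn (ZMod 2) id (Set.range ![u', v']) :=
    h'.linearIndepOn_id
  let b := Module.Basis.extend hs
  let b' := Module.Basis.extend hs'
  have hu : u ∈ hs.extend (Set.subset_univ _) :=
    hs.subset_extend _ ⟨0, by simp⟩
  have hv : v ∈ hs.extend (Set.subset_univ _) :=
    hs.subset_extend _ ⟨1, by simp⟩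
  have hu' : u' ∈ hs'.extend (Set.subset_univ _) :=
    hs'.subset_extend _ ⟨0, by simp⟩
  have hv' : v' ∈ hs'.extend (Set.subset_univ _) :=
    hs'.subset_extend _ ⟨1, by simp⟩
  let e0 := b.indexEquiv b'
  let e1 := e0.trans (Equiv.swap (e0 ⟨u, hu⟩) ⟨u', hu'⟩)
  have he1u : e1 ⟨u, hu⟩ = ⟨u', hu'⟩ := by simp [e1]
  let e2 := e1.trans (Equiv.swap (e1 ⟨v, hv⟩) ⟨v', hv'⟩)
  have hne1 : e1 ⟨v, hv⟩ ≠ ⟨u', hu'⟩ := by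
    rw [← he1u]
    exact fun hh => huv (congrArg Subtype.val (e1.injective hh)).symm
  have he2u : e2 ⟨u, hu⟩ = ⟨u', hu'⟩ := by
    simp only [e2, Equiv.trans_apply, he1u]
    rw [Equiv.swap_apply_of_ne_of_ne (Ne.symm hne1) (by simp [huv'])]
  have he2v : e2 ⟨v, hv⟩ = ⟨v', hv'⟩ := by
    simp [e2]
  refine ⟨b.equiv b' e2, ?_, ?_⟩
  · have := b.equiv_apply (b' := b') (i := ⟨u, hu⟩) (e := e2)
    rwa [Module.Basis.extend_apply_self, he2u, Module.Basis.extend_apply_self] at this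
  · have := b.equiv_apply (b' := b') (i := ⟨v, hv⟩) (e := e2)
    rwa [Module.Basis.extend_apply_self, he2v, Module.Basis.extend_apply_self] at this

private def cnt (n k : ℕ) (x y z : Fin n → ZMod 2) : ℕ :=
  (Finset.univ.filter (fun s : Finset (Fin n → ZMod 2) =>
    s.card = k ∧ (∑ w ∈ s, w) = 0 ∧ x ∈ s ∧ y ∈ s ∧ z ∈ s)).card

private lemma mem_filter_image {n k m : ℕ} (hk : k = 2 * m)
    (e : (Fin n → ZMod 2) ≃ₗ[ZMod 2] (Fin n → ZMod 2)) (c x y z : Fin n → ZMod 2)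
    {s : Finset (Fin n → ZMod 2)}
    (h : s.card = k ∧ (∑ w ∈ s, w) = 0 ∧ x ∈ s ∧ y ∈ s ∧ z ∈ s) :
    (s.image (fun a => e a + c)).card = k ∧ (∑ w ∈ s.image (fun a => e a + c), w) = 0 ∧
      e x + c ∈ s.image (fun a => e a + c) ∧ e y + c ∈ s.image (fun a => e a + c) ∧
      e z + c ∈ s.image (fun a => e a + c) := by
  obtain ⟨hcard, hsum, hx, hy, hz⟩ := h
  have hinj : Function.Injective (fun a : Fin n → ZMod 2 => e a + c) := by
    intro a b hab
    simp only [add_left_inj] at hab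
    exact e.injective hab
  have hkc : k • c = 0 := by
    rw [hk, mul_nsmul, two_nsmul, pi_add_self, smul_zero]
  refine ⟨by rw [Finset.card_image_of_injective _ hinj, hcard], ?_, ?_, ?_, ?_⟩
  · rw [Finset.sum_image (fun a _ b _ hab => hinj hab)]
    rw [Finset.sum_add_distrib, Finset.sum_const, ← map_sum, hsum, map_zero, zero_add,
      hcard, hkc]
  · exact Finset.mem_image_of_mem _ hx
  · exact Finset.mem_image_of_mem _ hy
  · exact Finset.mem_image_of_mem _ hz

private lemma cnt_affine {n k m : ℕ} (hk : k = 2 * m)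
    (e : (Fin n → ZMod 2) ≃ₗ[ZMod 2] (Fin n → ZMod 2)) (c x y z : Fin n → ZMod 2) :
    cnt n k x y z = cnt n k (e x + c) (e y + c) (e z + c) := by
  classical
  unfold cnt
  have hcomp : ∀ a : Fin n → ZMod 2, e.symm (e a + c) + (- e.symm c) = a := by
    intro a; rw [map_add, e.symm_apply_apply]; abel
  have hcomp' : ∀ b : Fin n → ZMod 2, e (e.symm b + (- e.symm c)) + c = b := by
    intro b; rw [map_add, e.apply_symm_apply, map_neg, e.apply_symm_apply]; abel
  refine Finset.card_nbij' (fun s => s.image (fun a => e a + c))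
    (fun s => s.image (fun b => e.symm b + (- e.symm c))) ?_ ?_ ?_ ?_
  · intro s hs
    rw [Finset.mem_coe, Finset.mem_filter] at hs ⊢
    exact ⟨Finset.mem_univ _, mem_filter_image hk e c x y z hs.2⟩
  · intro s hs
    rw [Finset.mem_coe, Finset.mem_filter] at hs ⊢
    have := mem_filter_image hk (e.symm) (- e.symm c) (e x + c) (e y + c) (e z + c) hs.2
    rw [hcomp, hcomp, hcomp] at this
    exact ⟨Finset.mem_univ _, this⟩
  · intro s _
    dsimp only
    rw [Finset.image_image]
    have : ((fun b => e.symm b + (- e.symm c)) ∘ (fun a => e a + c)) = id := funext hcomp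
    rw [this, Finset.image_id]
  · intro s _
    dsimp only
    rw [Finset.image_image]
    have : ((fun a => e a + c) ∘ (fun b => e.symm b + (- e.symm c))) = id := funext hcomp'
    rw [this, Finset.image_id]

/-- Let P = 𝔽₂ⁿ (n ≥ 2) and let k = 2m be even with 2 < k < 2ⁿ.
The family B of k-subsets of 𝔽₂ⁿ with zero sum is a 3-(2ⁿ,k,r₃) design:
every three pairwise distinct vectors lie in exactly r₃ members of B. -/
theorem stmt_7 (n : ℕ) (hn : 2 ≤ n) (k m : ℕ) (hk : k = 2 * m)
    (h2 : 2 < k) (hlt : k < 2 ^ n) :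
    ∃ r3 : ℕ, ∀ x y z : Fin n → ZMod 2, x ≠ y → x ≠ z → y ≠ z →
      (Finset.univ.filter (fun s : Finset (Fin n → ZMod 2) =>
        s.card = k ∧ (∑ w ∈ s, w) = 0 ∧ x ∈ s ∧ y ∈ s ∧ z ∈ s)).card = r3 := by
  classical
  set u₀ : Fin n → ZMod 2 := fun i => if i = ⟨0, by omega⟩ then 1 else 0 with hu₀
  set v₀ : Fin n → ZMod 2 := fun i => if i = ⟨1, by omega⟩ then 1 else 0 with hv₀
  have hu₀0 : u₀ ≠ 0 := by
    intro hh
    have := congrFun hh ⟨0, by omega⟩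
    simp [hu₀] at this
  have hv₀0 : v₀ ≠ 0 := by
    intro hh
    have := congrFun hh ⟨1, by omega⟩
    simp [hv₀] at this
  have huv₀ : u₀ ≠ v₀ := by
    intro hh
    have := congrFun hh ⟨0, by omega⟩
    simp [hu₀, hv₀, Fin.ext_iff] at this
  refine ⟨cnt n k 0 u₀ v₀, fun x y z hxy hxz hyz => ?_⟩
  show cnt n k x y z = cnt n k 0 u₀ v₀
  set u := x + y with hu
  set v := x + z with hv
  have hune : u ≠ 0 := by
    intro hh; apply hxy
    have : x + y + y = 0 + y := by rw [hu] at hh; rw [hh]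
    rwa [add_assoc, pi_add_self, add_zero, zero_add] at this
  have hvne : v ≠ 0 := by
    intro hh; apply hxz
    have : x + z + z = 0 + z := by rw [hv] at hh; rw [hh]
    rwa [add_assoc, pi_add_self, add_zero, zero_add] at this
  have huvne : u ≠ v := by
    intro hh; apply hyz
    have : x + (x + y) = x + (x + z) := by rw [hu, hv] at hh; rw [hh]
    rwa [← add_assoc, ← add_assoc, pi_add_self, zero_add, zero_add] at this
  obtain ⟨e, heu, hev⟩ := exists_equiv_pair huvne huv₀ (li_pair hune hvne huvne)
    (li_pair hu₀0 hv₀0 huv₀)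
  have h0 : e x + e x = 0 := pi_add_self _
  have h1 : e y + e x = u₀ := by rw [← map_add, add_comm, ← hu, heu]
  have h2' : e z + e x = v₀ := by rw [← map_add, add_comm, ← hv, hev]
  have := cnt_affine hk e (e x) x y z
  rwa [h0, h1, h2'] at this
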